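/- Let k be an integer with 0 ≤ k ≤ m-1, and define a = (γ^(2m+6k+2) + γ^(m+3k+1) + 1)/(3γ^(m+3k+1)), b = (γ^(2m) + γ^(m+3k+1) + γ^(6k+2))/(3γ^(m+3k+1)), c = (γ^(6k+2) + γ^(3k+1) + 1)/(3γ^(3k+1)) in F_q, and let g(x) = a·x^(2m+1) + b·x^(m+1) + c·x. Then for every integer i with 0 ≤ i ≤ m-1 one has g(γ^(3i)) = γ^(3i); that is, g fixes every cube in F_q^*. -/

import Mathlib

theorem stmt1 (q m : ℕ) (F : Type*) [Field F] [Fintype F]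
    (hq : Fintype.card F = q) (hodd : Odd q) (hq3 : q % 3 = 1)
    (hm : m = (q - 1) / 3)
    (γ : Fˣ) (hγ : ∀ x : Fˣ, x ∈ Subgroup.zpowers γ)
    (k : ℕ) (hk : k ≤ m - 1)
    (a b c : F)
    (ha : a = ((γ : F)^(2*m+6*k+2) + (γ : F)^(m+3*k+1) + 1) / (3 * (γ : F)^(m+3*k+1)))
    (hb : b = ((γ : F)^(2*m) + (γ : F)^(m+3*k+1) + (γ : F)^(6*k+2)) / (3 * (γ : F)^(m+3*k+1)))
    (hc : c = ((γ : F)^(6*k+2) + (γ : F)^(3*k+1) + 1) / (3 * (γ : F)^(3*k+1)))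
    (g : F → F)
    (hg : ∀ x : F, g x = a * x^(2*m+1) + b * x^(m+1) + c * x) :
    ∀ i : ℕ, i ≤ m - 1 → g ((γ : F)^(3*i)) = (γ : F)^(3*i) := by
  have hq2 : 2 ≤ q := by
    have := Fintype.one_lt_card (α := F)
    omega
  have h3m : 3 * m + 1 = q := by omega
  have hm1 : 1 ≤ m := by omega
  -- order of γ
  have hcardU : Nat.card Fˣ = 3 * m := by
    rw [Nat.card_units, Nat.card_eq_fintype_card, hq]; omega
  have hord : orderOf γ = 3 * m := by
    rw [← hcardU]
    exact orderOf_eq_card_of_forall_mem_zpowers hγ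
  have hγ3m : γ ^ (3 * m) = 1 := by
    rw [← hord]; exact pow_orderOf_eq_one γ
  have hγm : γ ^ m ≠ 1 := by
    intro h
    have := orderOf_dvd_of_pow_eq_one h
    rw [hord] at this
    have := Nat.le_of_dvd hm1 this
    omega
  set x : F := (γ : F) with hx
  have hxne : x ≠ 0 := Units.ne_zero γ
  have hx3m : x ^ (3 * m) = 1 := by
    have : ((γ ^ (3 * m) : Fˣ) : F) = ((1 : Fˣ) : F) := by rw [hγ3m]
    simpa using this
  have hω3 : (x ^ m) ^ 3 = 1 := by
    rw [← pow_mul, mul_comm]; exact hx3m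
  have hωne : x ^ m ≠ 1 := by
    intro h
    apply hγm
    apply Units.ext
    simpa using h
  have hω2 : (x ^ m) ^ 2 + x ^ m + 1 = 0 := by
    have hfac : (x ^ m - 1) * ((x ^ m) ^ 2 + x ^ m + 1) = 0 := by
      linear_combination hω3
    rcases mul_eq_zero.mp hfac with h | h
    · exact absurd (sub_eq_zero.mp h) hωne
    · exact h
  have h3 : (3 : F) ≠ 0 := by
    have hc0 : ((q : ℕ) : F) = 0 := by
      rw [← hq]; exact FiniteField.cast_card_eq_zero F
    intro h
    rw [← h3m] at hc0
    push_cast at hc0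
    rw [h] at hc0
    simp at hc0
  have hωnz : x ^ m ≠ 0 := pow_ne_zero _ hxne
  have htnz : x ^ (3 * k + 1) ≠ 0 := pow_ne_zero _ hxne
  -- rewrite the exponents
  have e1 : x ^ (2*m+6*k+2) = (x ^ m) ^ 2 * (x ^ (3*k+1)) ^ 2 := by
    rw [← pow_mul, ← pow_mul, ← pow_add]; ring_nf
  have e2 : x ^ (m+3*k+1) = x ^ m * x ^ (3*k+1) := by
    rw [← pow_add]; ring_nf
  have e3 : x ^ (6*k+2) = (x ^ (3*k+1)) ^ 2 := by
    rw [← pow_mul]; ring_nf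
  have e4 : x ^ (2*m) = (x ^ m) ^ 2 := by
    rw [← pow_mul]; ring_nf
  set ω : F := x ^ m with hωdef
  set t : F := x ^ (3*k+1) with htdef
  have habc : a + b + c = 1 := by
    rw [ha, hb, hc, e1, e2, e3, e4]
    field_simp
    linear_combination (t^2 + 1) * hω2
  -- now evaluate g
  intro i _
  rw [hg]
  have hXm : (x ^ (3 * i)) ^ m = 1 := by
    rw [← pow_mul, mul_comm (3*i) m, ← mul_assoc, mul_comm m 3, pow_mul, hx3m, one_pow]
  have h1 : (x ^ (3*i)) ^ (2*m+1) = x ^ (3*i) := by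
    rw [pow_add, pow_one, mul_comm 2 m, pow_mul, hXm, one_pow, one_mul]
  have h2 : (x ^ (3*i)) ^ (m+1) = x ^ (3*i) := by
    rw [pow_add, pow_one, hXm, one_mul]
  rw [h1, h2]
  linear_combination (x ^ (3*i)) * habc
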